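/- Let H be an m-inverse property Hopf quasigroup with antipode S such that S^r is a Hopf quasigroup automorphism, i.e., S^r(hg) = S^r(h)S^r(g) and Δ(S^r(h)) = S^r(h₍₁₎)⊗S^r(h₍₂₎) for all h,g. Then H is an (m+ur)-inverse property Hopf quasigroup for every integer u; that is, S^{m+ur}(h₍₂₎g)·S^{m+1+ur}(h₍₁₎) = ε(h)S^{m+ur}(g). -/

import Mathlib

open TensorProduct

theorem stmt_17 {k : Type*} [CommRing k] {H : Type*} [AddCommGroup H] [Module k H]
    (μ : H ⊗[k] H →ₗ[k] H) (one : H)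
    (Δ : H →ₗ[k] H ⊗[k] H) (ε : H →ₗ[k] k) (S : H ≃ₗ[k] H)
    -- unital (not necessarily associative) algebra
    (h_unit_l : ∀ h : H, μ (one ⊗ₜ[k] h) = h)
    (h_unit_r : ∀ h : H, μ (h ⊗ₜ[k] one) = h)
    -- coassociative counital coalgebra
    (h_coassoc : (TensorProduct.assoc k H H H).toLinearMap ∘ₗ
        (TensorProduct.map Δ LinearMap.id) ∘ₗ Δ = (TensorProduct.map LinearMap.id Δ) ∘ₗ Δ)
    (h_counit_l : ∀ h : H, (TensorProduct.lid k H) ((TensorProduct.map ε LinearMap.id) (Δ h)) = h)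
    (h_counit_r : ∀ h : H, (TensorProduct.rid k H) ((TensorProduct.map LinearMap.id ε) (Δ h)) = h)
    -- Δ and ε are multiplicative
    (h_comul_mul : Δ ∘ₗ μ = (TensorProduct.map μ μ) ∘ₗ
        (TensorProduct.tensorTensorTensorComm k H H H H).toLinearMap ∘ₗ (TensorProduct.map Δ Δ))
    (h_counit_mul : ε ∘ₗ μ = (TensorProduct.lid k k).toLinearMap ∘ₗ (TensorProduct.map ε ε))
    (h_comul_one : Δ one = one ⊗ₜ[k] one) (h_counit_one : ε one = 1)
    -- S is a coalgebra anti-automorphism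
    (h_S_comul : Δ ∘ₗ S.toLinearMap = (TensorProduct.comm k H H).toLinearMap ∘ₗ
        (TensorProduct.map S.toLinearMap S.toLinearMap) ∘ₗ Δ)
    (h_S_counit : ∀ h : H, ε (S h) = ε h)
    -- antipode property:  h₍₁₎ S(h₍₂₎) = ε(h) 1 = S(h₍₁₎) h₍₂₎
    (h_S_l : ∀ h : H, μ ((TensorProduct.map LinearMap.id S.toLinearMap) (Δ h)) = ε h • one)
    (h_S_r : ∀ h : H, μ ((TensorProduct.map S.toLinearMap LinearMap.id) (Δ h)) = ε h • one)
    (m r : ℤ)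
    -- m-inverse property:  S^m(h₍₂₎ g) S^{m+1}(h₍₁₎) = ε(h) S^m(g)
    (h_m_inv : ∀ h g : H,
      μ ((TensorProduct.map ((S ^ m).toLinearMap ∘ₗ μ) (S ^ (m + 1)).toLinearMap)
        ((TensorProduct.comm k H (H ⊗[k] H))
          ((TensorProduct.assoc k H H H)
            ((TensorProduct.map Δ LinearMap.id) (h ⊗ₜ[k] g))))) = ε h • (S ^ m) g)
    -- S^r is a Hopf quasigroup automorphism
    (h_Sr_mul : ∀ h g : H, (S ^ r) (μ (h ⊗ₜ[k] g)) = μ ((S ^ r) h ⊗ₜ[k] (S ^ r) g))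
    (h_Sr_comul : ∀ h : H,
      Δ ((S ^ r) h) = (TensorProduct.map (S ^ r).toLinearMap (S ^ r).toLinearMap) (Δ h)) :
    ∀ u : ℤ, ∀ h g : H,
      μ ((TensorProduct.map ((S ^ (m + u * r)).toLinearMap ∘ₗ μ) (S ^ (m + 1 + u * r)).toLinearMap)
        ((TensorProduct.comm k H (H ⊗[k] H))
          ((TensorProduct.assoc k H H H)
            ((TensorProduct.map Δ LinearMap.id) (h ⊗ₜ[k] g))))) = ε h • (S ^ (m + u * r)) g := by
  intro u h g
  have hcomm : ∀ (x y : ℤ) (z : H), (S ^ (x + y)) z = (S ^ x) ((S ^ y) z) := by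
    intro x y z; rw [zpow_add]; rfl
  -- combining two `map`s of equivs into one
  have maps_eq : ∀ (A B C : H ≃ₗ[k] H), (∀ z : H, C z = A (B z)) → ∀ t : H ⊗[k] H,
      (TensorProduct.map C.toLinearMap C.toLinearMap) t
        = (TensorProduct.map A.toLinearMap A.toLinearMap)
            ((TensorProduct.map B.toLinearMap B.toLinearMap) t) := by
    intro A B C hABC t
    induction t using TensorProduct.induction_on with
    | zero => simp
    | tmul a b => simp [hABC]
    | add a b ia ib => simp [ia, ib, -LinearEquiv.coe_coe]
  have map_one_one : ∀ t : H ⊗[k] H,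
      (TensorProduct.map ((1 : H ≃ₗ[k] H)).toLinearMap ((1 : H ≃ₗ[k] H)).toLinearMap) t = t := by
    intro t
    induction t using TensorProduct.induction_on with
    | zero => simp
    | tmul a b => rfl
    | add a b ia ib => rw [map_add, ia, ib]
  -- ε is invariant under all integer powers of S
  have hε : ∀ n : ℤ, ∀ x : H, ε ((S ^ n) x) = ε x := by
    intro n
    induction n using Int.induction_on with
    | zero => intro x; rfl
    | succ n ih =>
      intro x
      rw [show ((n : ℤ) + 1) = 1 + n by ring, hcomm 1 n x, zpow_one, h_S_counit, ih]
    | pred n ih =>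
      intro x
      rw [show (-(n : ℤ) - 1) = (-1) + (-n) by ring, hcomm (-1) (-n) x]
      have h1 : ε ((S ^ (-1 : ℤ)) ((S ^ (-n : ℤ)) x))
          = ε (S ((S ^ (-1 : ℤ)) ((S ^ (-n : ℤ)) x))) := (h_S_counit _).symm
      have h2 : S ((S ^ (-1 : ℤ)) ((S ^ (-n : ℤ)) x)) = (S ^ (-n : ℤ)) x := by
        rw [show ∀ z : H, S ((S ^ (-1 : ℤ)) z) = (S ^ (1 : ℤ)) ((S ^ (-1 : ℤ)) z) from fun z => rfl,
          ← hcomm 1 (-1)]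
        norm_num
      rw [h1, h2, ih]
  -- (S^r)^n is multiplicative for every integer n
  have hmulT : ∀ n : ℤ, ∀ x y : H,
      (((S ^ r) ^ n)) (μ (x ⊗ₜ[k] y)) = μ ((((S ^ r) ^ n)) x ⊗ₜ[k] (((S ^ r) ^ n)) y) := by
    have hinv : ∀ x y : H, ((S ^ r)⁻¹) (μ (x ⊗ₜ[k] y)) = μ (((S ^ r)⁻¹) x ⊗ₜ[k] ((S ^ r)⁻¹) y) := by
      intro x y
      apply (S ^ r).injective
      rw [h_Sr_mul]
      have e1 : (S ^ r) (((S ^ r)⁻¹) (μ (x ⊗ₜ[k] y))) = μ (x ⊗ₜ[k] y) := (S ^ r).apply_symm_apply _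
      have e2 : (S ^ r) (((S ^ r)⁻¹) x) = x := (S ^ r).apply_symm_apply _
      have e3 : (S ^ r) (((S ^ r)⁻¹) y) = y := (S ^ r).apply_symm_apply _
      rw [e1, e2, e3]
    intro n
    induction n using Int.induction_on with
    | zero => intro x y; rfl
    | succ n ih =>
      intro x y
      have e : ∀ z : H, ((S ^ r) ^ ((n : ℤ) + 1)) z = ((S ^ r) ^ (n : ℤ)) ((S ^ r) z) := by
        intro z; rw [zpow_add, zpow_one]; rfl
      rw [e, e, e, h_Sr_mul, ih]
    | pred n ih =>
      intro x y
      have e : ∀ z : H, ((S ^ r) ^ (-(n : ℤ) - 1)) z = ((S ^ r) ^ (-n : ℤ)) (((S ^ r)⁻¹) z) := by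
        intro z; rw [show (-(n : ℤ) - 1) = (-n) + (-1) by ring, zpow_add, zpow_neg_one]; rfl
      rw [e, e, e, hinv, ih]
  -- (S^r)^n commutes with Δ via map
  have hcomulT : ∀ n : ℤ, ∀ x : H,
      Δ ((((S ^ r) ^ n)) x) = (TensorProduct.map (((S ^ r) ^ n)).toLinearMap
        (((S ^ r) ^ n)).toLinearMap) (Δ x) := by
    have hinv : ∀ x : H, Δ (((S ^ r)⁻¹) x)
        = (TensorProduct.map ((S ^ r)⁻¹).toLinearMap ((S ^ r)⁻¹).toLinearMap) (Δ x) := by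
      intro x
      apply (TensorProduct.congr (S ^ r) (S ^ r)).injective
      have hc : ∀ t : H ⊗[k] H, (TensorProduct.congr (S ^ r) (S ^ r)) t
          = (TensorProduct.map (S ^ r).toLinearMap (S ^ r).toLinearMap) t := fun t => rfl
      have hx : (S ^ r) (((S ^ r)⁻¹) x) = x := (S ^ r).apply_symm_apply _
      rw [hc, hc, ← h_Sr_comul, hx,
        ← maps_eq (S ^ r) ((S ^ r)⁻¹) 1 (fun z => ((S ^ r).apply_symm_apply z).symm) (Δ x),
        map_one_one]
    intro n
    induction n using Int.induction_on with
    | zero =>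
      intro x
      rw [show ((S ^ r) ^ (0 : ℤ)) x = ((1 : H ≃ₗ[k] H)) x from rfl,
        show ((S ^ r) ^ (0 : ℤ)) = (1 : H ≃ₗ[k] H) from zpow_zero _, map_one_one]
      rfl
    | succ n ih =>
      intro x
      have e : ∀ z : H, ((S ^ r) ^ ((n : ℤ) + 1)) z = ((S ^ r) ^ (n : ℤ)) ((S ^ r) z) := by
        intro z; rw [zpow_add, zpow_one]; rfl
      rw [e, ih, h_Sr_comul, ← maps_eq ((S ^ r) ^ (n : ℤ)) (S ^ r) ((S ^ r) ^ ((n : ℤ) + 1)) e]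
    | pred n ih =>
      intro x
      have e : ∀ z : H, ((S ^ r) ^ (-(n : ℤ) - 1)) z = ((S ^ r) ^ (-n : ℤ)) (((S ^ r)⁻¹) z) := by
        intro z; rw [show (-(n : ℤ) - 1) = (-n) + (-1) by ring, zpow_add, zpow_neg_one]; rfl
      rw [e, ih, hinv, ← maps_eq ((S ^ r) ^ (-n : ℤ)) ((S ^ r)⁻¹) ((S ^ r) ^ (-(n : ℤ) - 1)) e]
  -- specialize to T := S ^ (u * r)
  have hur : S ^ (u * r) = (S ^ r) ^ u := by rw [mul_comm, zpow_mul]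
  have hmulU : ∀ x y : H,
      (S ^ (u * r)) (μ (x ⊗ₜ[k] y)) = μ ((S ^ (u * r)) x ⊗ₜ[k] (S ^ (u * r)) y) := by
    rw [hur]; exact hmulT u
  have hcomulU : ∀ x : H, Δ ((S ^ (u * r)) x)
      = (TensorProduct.map (S ^ (u * r)).toLinearMap (S ^ (u * r)).toLinearMap) (Δ x) := by
    rw [hur]; exact hcomulT u
  -- apply the m-inverse property to transformed elements
  have key := h_m_inv ((S ^ (u * r)) h) ((S ^ (u * r)) g)
  rw [hε (u * r) h, ← hcomm m (u * r) g] at key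
  rw [← key]
  simp only [TensorProduct.map_tmul, LinearMap.id_coe, id_eq] at *
  rw [hcomulU h]
  generalize Δ h = t
  induction t using TensorProduct.induction_on with
  | zero => simp
  | tmul x y =>
    simp only [TensorProduct.map_tmul, TensorProduct.assoc_tmul, TensorProduct.comm_tmul,
      LinearMap.comp_apply, LinearEquiv.coe_coe]
    rw [← hmulU, ← hcomm m (u * r), ← hcomm (m + 1) (u * r)]
  | add t1 t2 ih1 ih2 =>
    simp only [TensorProduct.add_tmul, map_add] at *
    rw [ih1, ih2]
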